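/- Let k ≥ 2, let Δ be a finite abstract simplicial complex on a finite vertex set V, and let p : V → ℝ^{2k+1} be a map such that for every (k−1)-face τ of Δ the vectors {p(v) : v ∈ τ} are linearly independent. Let W_{k+1}(Δ, p) be the space of Minkowski weights on k-faces (balancing condition over (k−1)-faces) and let W_k(Δ, p) be the space of Minkowski weights on (k−1)-faces (balancing condition over (k−2)-faces). If dim W_{k+1}(Δ, p) ≤ dim W_k(Δ, p), then f_k(Δ) ≤ (k+2)·f_{k−1}(Δ), where f_j(Δ) is the number of j-dimensional faces of Δ. (This is the numerical step deriving the Grünbaum–Kalai–Sarkaria bound from monotonicity of the weight spaces.) -/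

import Mathlib

/-- **The Grünbaum–Kalai–Sarkaria bound from monotonicity of Minkowski weight
spaces.**  Let `Δ` be a finite simplicial complex with vertices positioned in
`ℝ^{2k+1}` (`k ≥ 2`) so that the vertices of every `(k-1)`-face are linearly
independent.  Let `Wk1` be the space of Minkowski weights on `k`-faces and
`Wk` the space of Minkowski weights on `(k-1)`-faces.  If
`dim Wk1 ≤ dim Wk`, then `f_k(Δ) ≤ (k+2) · f_{k-1}(Δ)`. -/
theorem gks_bound_from_weight_monotonicity
    (k : ℕ) (hk : 2 ≤ k)
    (V : Type*) [Fintype V] [DecidableEq V]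
    (Δ : Finset (Finset V))
    (hΔ : ∀ σ ∈ Δ, ∀ τ ⊆ σ, τ ∈ Δ)
    (p : V → (Fin (2 * k + 1) → ℝ))
    (hp : ∀ τ ∈ Δ, τ.card = k →
      LinearIndependent ℝ (fun v : {x // x ∈ τ} => p v))
    (Wk1 : Submodule ℝ ({σ : Finset V // σ ∈ Δ ∧ σ.card = k + 1} → ℝ))
    (hWk1 : ∀ c, c ∈ Wk1 ↔
      ∀ τ ∈ Δ, τ.card = k →
        (∑ σ : {σ : Finset V // σ ∈ Δ ∧ σ.card = k + 1},
            if τ ⊆ σ.1 then ∑ v ∈ σ.1 \ τ, c σ • p v else 0)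
          ∈ Submodule.span ℝ (p '' ↑τ))
    (Wk : Submodule ℝ ({σ : Finset V // σ ∈ Δ ∧ σ.card = k} → ℝ))
    (hWk : ∀ c, c ∈ Wk ↔
      ∀ τ ∈ Δ, τ.card = k - 1 →
        (∑ σ : {σ : Finset V // σ ∈ Δ ∧ σ.card = k},
            if τ ⊆ σ.1 then ∑ v ∈ σ.1 \ τ, c σ • p v else 0)
          ∈ Submodule.span ℝ (p '' ↑τ))
    (hmono : Module.finrank ℝ ↥Wk1 ≤ Module.finrank ℝ ↥Wk) :
    (Δ.filter fun σ => σ.card = k + 1).card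
      ≤ (k + 2) * (Δ.filter fun σ => σ.card = k).card := by
  classical
  -- abbreviations
  let A := {σ : Finset V // σ ∈ Δ ∧ σ.card = k + 1}
  let B := {τ : Finset V // τ ∈ Δ ∧ τ.card = k}
  -- the subspace spanned by a (k-1)-face
  let S : B → Submodule ℝ (Fin (2 * k + 1) → ℝ) :=
    fun τ => Submodule.span ℝ (p '' ↑τ.1)
  -- vectors for the balancing map
  let w : B → A → (Fin (2 * k + 1) → ℝ) :=
    fun τ σ => if τ.1 ⊆ σ.1 then ∑ v ∈ σ.1 \ τ.1, p v else 0
  let G : B → ((A → ℝ) →ₗ[ℝ] (Fin (2 * k + 1) → ℝ)) :=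
    fun τ => Fintype.linearCombination ℝ (w τ)
  have hG : ∀ (c : A → ℝ) (τ : B), G τ c =
      ∑ σ : A, if τ.1 ⊆ σ.1 then ∑ v ∈ σ.1 \ τ.1, c σ • p v else 0 := by
    intro c τ
    rw [Fintype.linearCombination_apply]
    refine Finset.sum_congr rfl fun σ _ => ?_
    by_cases h : τ.1 ⊆ σ.1 <;> simp [w, h, Finset.smul_sum, smul_sub]
  -- the full balancing map
  let F : (A → ℝ) →ₗ[ℝ] (∀ τ : B, (Fin (2 * k + 1) → ℝ) ⧸ S τ) :=
    LinearMap.pi fun τ => (S τ).mkQ ∘ₗ G τ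
  have hker : Wk1 = LinearMap.ker F := by
    ext c
    rw [hWk1, LinearMap.mem_ker, funext_iff]
    constructor
    · intro h τ
      simp only [F, LinearMap.pi_apply, LinearMap.comp_apply, Submodule.mkQ_apply,
        Pi.zero_apply, Submodule.Quotient.mk_eq_zero, hG]
      exact h τ.1 τ.2.1 τ.2.2
    · intro h τ hτ hcard
      have := h ⟨τ, hτ, hcard⟩
      simpa only [F, LinearMap.pi_apply, LinearMap.comp_apply, Submodule.mkQ_apply,
        Pi.zero_apply, Submodule.Quotient.mk_eq_zero, hG] using this
  -- dimension of each quotient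
  have hq : ∀ τ : B, Module.finrank ℝ ((Fin (2 * k + 1) → ℝ) ⧸ S τ) = k + 1 := by
    intro τ
    have hli := hp τ.1 τ.2.1 τ.2.2
    have hrange : p '' ↑τ.1 = Set.range (fun v : {x // x ∈ τ.1} => p v) := by
      ext x
      simp
    have hS : Module.finrank ℝ (S τ) = k := by
      rw [show S τ = Submodule.span ℝ (Set.range fun v : {x // x ∈ τ.1} => p v) by
        rw [← hrange]]
      rw [finrank_span_eq_card hli, Fintype.card_coe, τ.2.2]
    have := Submodule.finrank_quotient_add_finrank (S τ)
    rw [hS, Module.finrank_pi, Fintype.card_fin] at this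
    omega
  -- rank bounds
  have h1 : Fintype.card A =
      Module.finrank ℝ (LinearMap.range F) + Module.finrank ℝ (LinearMap.ker F) := by
    rw [LinearMap.finrank_range_add_finrank_ker F, Module.finrank_pi]
  have h2 : Module.finrank ℝ (LinearMap.range F) ≤ Fintype.card B * (k + 1) := by
    calc Module.finrank ℝ (LinearMap.range F)
        ≤ Module.finrank ℝ (∀ τ : B, (Fin (2 * k + 1) → ℝ) ⧸ S τ) :=
          Submodule.finrank_le _
      _ = ∑ τ : B, Module.finrank ℝ ((Fin (2 * k + 1) → ℝ) ⧸ S τ) :=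
          Module.finrank_pi_fintype ℝ
      _ = Fintype.card B * (k + 1) := by
          simp [hq, Finset.sum_const, Finset.card_univ, mul_comm]
  have h3 : Module.finrank ℝ ↥Wk ≤ Fintype.card B := by
    calc Module.finrank ℝ ↥Wk ≤ Module.finrank ℝ (B → ℝ) := Submodule.finrank_le _
      _ = Fintype.card B := Module.finrank_pi ℝ
  -- identify cardinalities with the filtered face counts
  have hAcard : Fintype.card A = (Δ.filter fun σ => σ.card = k + 1).card := by
    rw [Fintype.card_subtype]
    congr 1
    ext σ
    simp [Finset.mem_filter, and_comm]
  have hBcard : Fintype.card B = (Δ.filter fun σ => σ.card = k).card := by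
    rw [Fintype.card_subtype]
    congr 1
    ext σ
    simp [Finset.mem_filter, and_comm]
  rw [hker] at hmono
  calc (Δ.filter fun σ => σ.card = k + 1).card = Fintype.card A := hAcard.symm
    _ = Module.finrank ℝ (LinearMap.range F) + Module.finrank ℝ (LinearMap.ker F) := h1
    _ ≤ Fintype.card B * (k + 1) + Module.finrank ℝ (LinearMap.ker F) :=
        Nat.add_le_add_right h2 _
    _ ≤ Fintype.card B * (k + 1) + Fintype.card B :=
        Nat.add_le_add_left (hmono.trans h3) _
    _ = (k + 2) * Fintype.card B := by ring
    _ = (k + 2) * (Δ.filter fun σ => σ.card = k).card := by rw [hBcard]
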